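/- arXiv:2307.14940 — 2 statements merged into one kernel-verified Lean document; each statement's English description precedes it below -/
import Mathlib

section
/- Let S ⊆ ℝⁿ, l : ℝⁿ → ℝ nonnegative, p : ℝⁿ → ℝ strictly positive outside S, ψ(x) = 1 - 1/(1+x), and φ(θ) = ψ(l(θ)) if θ ∈ S, else ψ(l(θ)) + p(θ). Assume for every θ ∉ S there exists ω ∈ S with l(ω) ≤ l(θ). If θ* is a global minimizer of φ on ℝⁿ, then θ* ∈ S and θ* is a global minimizer of l restricted to S. -/
lemma psi_mono_aux (a b : ℝ) (ha : 0 ≤ a) (hb : 0 ≤ b) (hab : a ≤ b) :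
    1 - 1 / (1 + a) ≤ 1 - 1 / (1 + b) := by
  have h1 : (0:ℝ) < 1 + a := by linarith
  have h2 : (0:ℝ) < 1 + b := by linarith
  have : 1 / (1 + b) ≤ 1 / (1 + a) := by
    apply one_div_le_one_div_of_le h1; linarith
  linarith

lemma psi_mono_rev (a b : ℝ) (ha : 0 ≤ a) (hb : 0 ≤ b)
    (h : 1 - 1 / (1 + a) ≤ 1 - 1 / (1 + b)) : a ≤ b := by
  have h1 : (0:ℝ) < 1 + a := by linarith
  have h2 : (0:ℝ) < 1 + b := by linarith
  have h3 : 1 / (1 + b) ≤ 1 / (1 + a) := by linarith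
  by_contra hc
  push_neg at hc
  have : 1 / (1 + a) < 1 / (1 + b) := by
    apply one_div_lt_one_div_of_lt h2; linarith
  linarith

theorem global_min_of_penalty_is_global_min_of_constrained
    (n : ℕ) (S : Set (Fin n → ℝ)) (l p : (Fin n → ℝ) → ℝ)
    (ψ : ℝ → ℝ) (hψ : ∀ x, ψ x = 1 - 1 / (1 + x))
    (φ : (Fin n → ℝ) → ℝ)
    (hφin : ∀ θ ∈ S, φ θ = ψ (l θ))
    (hφout : ∀ θ ∉ S, φ θ = ψ (l θ) + p θ)
    (hl : ∀ θ, 0 ≤ l θ) (hp : ∀ θ ∉ S, 0 < p θ)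
    (hω : ∀ θ ∉ S, ∃ ω ∈ S, l ω ≤ l θ)
    (θs : Fin n → ℝ) (hmin : ∀ θ : Fin n → ℝ, φ θs ≤ φ θ) :
    θs ∈ S ∧ ∀ θ ∈ S, l θs ≤ l θ := by
  have hS : θs ∈ S := by
    by_contra hns
    obtain ⟨ω, hωS, hωl⟩ := hω θs hns
    have h1 := hmin ω
    rw [hφin ω hωS, hφout θs hns, hψ, hψ] at h1
    have h2 := psi_mono_aux (l ω) (l θs) (hl ω) (hl θs) hωl
    have := hp θs hns
    linarith
  refine ⟨hS, fun θ hθ => ?_⟩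
  have h1 := hmin θ
  rw [hφin θ hθ, hφin θs hS, hψ, hψ] at h1
  exact psi_mono_rev _ _ (hl θs) (hl θ) h1
end

section
/- Under the hypotheses that l ≥ 0, p > 0 outside S, and for every infeasible point θ there exists a feasible point ω with l(ω) ≤ l(θ), a point θ* ∈ S is a global minimizer of l on S if and only if θ* is a global minimizer of the self-adaptive penalty function φ on ℝⁿ, where φ(θ) = ψ(l(θ)) for θ ∈ S and φ(θ) = ψ(l(θ)) + p(θ) otherwise, with ψ(x) = 1 - 1/(1+x). -/
theorem constrained_min_iff_penalty_min
    (n : ℕ) (S : Set (Fin n → ℝ)) (l p : (Fin n → ℝ) → ℝ)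
    (ψ : ℝ → ℝ) (hψ : ∀ x, ψ x = 1 - 1 / (1 + x))
    (φ : (Fin n → ℝ) → ℝ)
    (hφin : ∀ θ ∈ S, φ θ = ψ (l θ))
    (hφout : ∀ θ ∉ S, φ θ = ψ (l θ) + p θ)
    (hl : ∀ θ, 0 ≤ l θ) (hp0 : ∀ θ, 0 ≤ p θ) (hp : ∀ θ ∉ S, 0 < p θ)
    (hω : ∀ θ ∉ S, ∃ ω ∈ S, l ω ≤ l θ)
    (θs : Fin n → ℝ) (hθsS : θs ∈ S) :
    (∀ θ ∈ S, l θs ≤ l θ) ↔ (∀ θ : Fin n → ℝ, φ θs ≤ φ θ) := by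
  have hψmono : ∀ x y : ℝ, 0 ≤ x → x ≤ y → ψ x ≤ ψ y := by
    intro x y hx hxy
    rw [hψ, hψ]
    have h1 : (0:ℝ) < 1 + x := by linarith
    have h2 : (0:ℝ) < 1 + y := by linarith
    have : 1 / (1 + y) ≤ 1 / (1 + x) := by
      apply one_div_le_one_div_of_le h1; linarith
    linarith
  have hψrev : ∀ x y : ℝ, 0 ≤ x → 0 ≤ y → ψ x ≤ ψ y → x ≤ y := by
    intro x y hx hy h
    rw [hψ, hψ] at h
    have h1 : (0:ℝ) < 1 + x := by linarith
    have h2 : (0:ℝ) < 1 + y := by linarith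
    have h3 : 1 / (1 + y) ≤ 1 / (1 + x) := by linarith
    rw [div_le_div_iff₀ h2 h1] at h3
    linarith
  constructor
  · intro h θ
    by_cases hθ : θ ∈ S
    · rw [hφin θs hθsS, hφin θ hθ]
      exact hψmono _ _ (hl θs) (h θ hθ)
    · obtain ⟨ω, hωS, hωl⟩ := hω θ hθ
      rw [hφin θs hθsS, hφout θ hθ]
      have := hψmono _ _ (hl θs) (le_trans (h ω hωS) hωl)
      have := hp θ hθ
      linarith
  · intro h θ hθ
    have := h θ
    rw [hφin θs hθsS, hφin θ hθ] at this
    exact hψrev _ _ (hl θs) (hl θ) this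
end
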